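/- Let (γ_j)_{j≥1} be non-negative reals and (Γ_ℓ)_{ℓ≥0} be non-negative with Γ_ℓ ≤ c (ℓ!)^{1/λ} for all ℓ and some c > 0, λ > 0. Define POD weights γ_u = Γ_{|u|} ∏_{j∈u} γ_j. If α > 1/2, αλ > 1, and 2ζ(αλ) Σ_{j=1}^∞ γ_j^λ < 1, then Σ_{u ⊂ ℕ, |u|<∞} γ_u^λ (2ζ(αλ))^{|u|} ≤ c^λ (1 − 2ζ(αλ) Σ_j γ_j^λ)^{-1} < ∞. -/

import Mathlib

open Finset

private lemma pod_step_eq (x : ℕ → ℝ) (T : Finset ℕ) (k : ℕ) :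
    ∑ v ∈ T.powersetCard (k + 1), ∑ j ∈ v, (x j * ∏ i ∈ v.erase j, x i)
      = ∑ u ∈ T.powersetCard k, ∑ j ∈ T \ u, (x j * ∏ i ∈ u, x i) := by
  rw [Finset.sum_sigma', Finset.sum_sigma']
  refine Finset.sum_nbij' (fun p => ⟨p.1.erase p.2, p.2⟩)
    (fun p => ⟨insert p.2 p.1, p.2⟩) ?_ ?_ ?_ ?_ ?_
  · rintro ⟨v, j⟩ hp
    simp only [Finset.mem_sigma, Finset.mem_powersetCard] at hp ⊢
    obtain ⟨⟨hvT, hvc⟩, hj⟩ := hp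
    refine ⟨⟨(Finset.erase_subset _ _).trans hvT, ?_⟩, ?_⟩
    · rw [Finset.card_erase_of_mem hj, hvc]; omega
    · simp [Finset.mem_sdiff, hvT hj]
  · rintro ⟨u, j⟩ hp
    simp only [Finset.mem_sigma, Finset.mem_powersetCard, Finset.mem_sdiff] at hp ⊢
    obtain ⟨⟨huT, huc⟩, hjT, hju⟩ := hp
    refine ⟨⟨Finset.insert_subset hjT huT, ?_⟩, Finset.mem_insert_self _ _⟩
    rw [Finset.card_insert_of_notMem hju, huc]
  · rintro ⟨v, j⟩ hp
    simp only [Finset.mem_sigma, Finset.mem_powersetCard] at hp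
    simp [Finset.insert_erase hp.2]
  · rintro ⟨u, j⟩ hp
    simp only [Finset.mem_sigma, Finset.mem_powersetCard, Finset.mem_sdiff] at hp
    simp [Finset.erase_insert_of_ne, Finset.erase_insert hp.2.2]
  · rintro ⟨v, j⟩ hp
    simp only [Finset.mem_sigma, Finset.mem_powersetCard] at hp
    simp [Finset.insert_erase hp.2]

private lemma pod_key (x : ℕ → ℝ) (hx : ∀ j, 0 ≤ x j) (T : Finset ℕ) (k : ℕ) :
    (k.factorial : ℝ) * ∑ u ∈ T.powersetCard k, ∏ j ∈ u, x j
      ≤ (∑ j ∈ T, x j) ^ k := by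
  induction k with
  | zero => simp
  | succ k ih =>
    have hsum0 : (0:ℝ) ≤ ∑ j ∈ T, x j := Finset.sum_nonneg fun j _ => hx j
    have hstep : ((k:ℝ) + 1) * ∑ v ∈ T.powersetCard (k + 1), ∏ j ∈ v, x j
        ≤ (∑ j ∈ T, x j) * ∑ u ∈ T.powersetCard k, ∏ j ∈ u, x j := by
      have h1 : ((k:ℝ) + 1) * ∑ v ∈ T.powersetCard (k + 1), ∏ j ∈ v, x j
          = ∑ v ∈ T.powersetCard (k + 1), ∑ j ∈ v, (x j * ∏ i ∈ v.erase j, x i) := by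
        rw [Finset.mul_sum]
        refine Finset.sum_congr rfl fun v hv => ?_
        have hvc : v.card = k + 1 := (Finset.mem_powersetCard.1 hv).2
        have : ∀ j ∈ v, x j * ∏ i ∈ v.erase j, x i = ∏ i ∈ v, x i := fun j hj =>
          Finset.mul_prod_erase v x hj
        rw [Finset.sum_congr rfl this, Finset.sum_const, hvc]
        push_cast
        ring
      rw [h1, pod_step_eq]
      calc ∑ u ∈ T.powersetCard k, ∑ j ∈ T \ u, (x j * ∏ i ∈ u, x i)
          ≤ ∑ u ∈ T.powersetCard k, ∑ j ∈ T, (x j * ∏ i ∈ u, x i) := by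
            refine Finset.sum_le_sum fun u _ => ?_
            refine Finset.sum_le_sum_of_subset_of_nonneg (Finset.sdiff_subset) ?_
            intro j _ _
            exact mul_nonneg (hx j) (Finset.prod_nonneg fun i _ => hx i)
        _ = (∑ j ∈ T, x j) * ∑ u ∈ T.powersetCard k, ∏ j ∈ u, x j := by
            rw [Finset.mul_sum]
            refine Finset.sum_congr rfl fun u _ => ?_
            rw [← Finset.sum_mul]
    calc ((k + 1).factorial : ℝ) * ∑ v ∈ T.powersetCard (k + 1), ∏ j ∈ v, x j
        = (k.factorial : ℝ) * (((k:ℝ) + 1) * ∑ v ∈ T.powersetCard (k + 1), ∏ j ∈ v, x j) := by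
          rw [Nat.factorial_succ]
          push_cast
          ring
      _ ≤ (k.factorial : ℝ) * ((∑ j ∈ T, x j) * ∑ u ∈ T.powersetCard k, ∏ j ∈ u, x j) := by
          exact mul_le_mul_of_nonneg_left hstep (by positivity)
      _ = (∑ j ∈ T, x j) * ((k.factorial : ℝ) * ∑ u ∈ T.powersetCard k, ∏ j ∈ u, x j) := by
          ring
      _ ≤ (∑ j ∈ T, x j) * (∑ j ∈ T, x j) ^ k := mul_le_mul_of_nonneg_left ih hsum0
      _ = (∑ j ∈ T, x j) ^ (k + 1) := by ring

theorem pod_weights_tractability_sum (γ : ℕ → ℝ) (hγ : ∀ j, 0 ≤ γ j)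
    (Γ : ℕ → ℝ) (hΓ0 : ∀ ℓ, 0 ≤ Γ ℓ)
    (c : ℝ) (hc : 0 < c) (lam : ℝ) (hlam : 0 < lam)
    (hΓ : ∀ ℓ : ℕ, Γ ℓ ≤ c * (ℓ.factorial : ℝ) ^ (1 / lam))
    (α : ℝ) (hα : 1 / 2 < α) (hαlam : 1 < α * lam)
    (hsum : Summable (fun j => γ j ^ lam))
    (hsmall : (2 * ∑' n : ℕ, 1 / ((n : ℝ) + 1) ^ (α * lam)) * (∑' j : ℕ, γ j ^ lam) < 1) :
    Summable (fun u : Finset ℕ =>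
        (Γ u.card * ∏ j ∈ u, γ j) ^ lam *
          (2 * ∑' n : ℕ, 1 / ((n : ℝ) + 1) ^ (α * lam)) ^ u.card) ∧
      (∑' u : Finset ℕ,
          (Γ u.card * ∏ j ∈ u, γ j) ^ lam *
            (2 * ∑' n : ℕ, 1 / ((n : ℝ) + 1) ^ (α * lam)) ^ u.card) ≤
        c ^ lam *
          (1 - (2 * ∑' n : ℕ, 1 / ((n : ℝ) + 1) ^ (α * lam)) * (∑' j : ℕ, γ j ^ lam))⁻¹ := by
  set Z : ℝ := 2 * ∑' n : ℕ, 1 / ((n : ℝ) + 1) ^ (α * lam) with hZdef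
  set S : ℝ := ∑' j : ℕ, γ j ^ lam with hSdef
  have hZ : 0 ≤ Z := by
    refine mul_nonneg (by norm_num) (tsum_nonneg fun n => ?_)
    positivity
  have hS : 0 ≤ S := tsum_nonneg fun j => Real.rpow_nonneg (hγ j) lam
  set q : ℝ := Z * S with hqdef
  have hq0 : 0 ≤ q := mul_nonneg hZ hS
  have hq1 : q < 1 := hsmall
  set x : ℕ → ℝ := fun j => γ j ^ lam * Z with hxdef
  have hx : ∀ j, 0 ≤ x j := fun j => mul_nonneg (Real.rpow_nonneg (hγ j) lam) hZ
  set f : Finset ℕ → ℝ := fun u => (Γ u.card * ∏ j ∈ u, γ j) ^ lam * Z ^ u.card with hfdef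
  have hf0 : ∀ u, 0 ≤ f u := fun u =>
    mul_nonneg (Real.rpow_nonneg (mul_nonneg (hΓ0 _) (Finset.prod_nonneg fun j _ => hγ j)) lam)
      (pow_nonneg hZ _)
  -- pointwise bound
  have hfb : ∀ u : Finset ℕ, f u ≤ c ^ lam * ((u.card.factorial : ℝ) * ∏ j ∈ u, x j) := by
    intro u
    have hprod0 : (0:ℝ) ≤ ∏ j ∈ u, γ j := Finset.prod_nonneg fun j _ => hγ j
    have h1 : (Γ u.card * ∏ j ∈ u, γ j) ^ lam
        = Γ u.card ^ lam * (∏ j ∈ u, γ j) ^ lam :=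
      Real.mul_rpow (hΓ0 _) hprod0
    have h2 : Γ u.card ^ lam ≤ c ^ lam * (u.card.factorial : ℝ) := by
      have := Real.rpow_le_rpow (hΓ0 u.card) (hΓ u.card) hlam.le
      calc Γ u.card ^ lam ≤ (c * (u.card.factorial : ℝ) ^ (1 / lam)) ^ lam := this
        _ = c ^ lam * (u.card.factorial : ℝ) := by
            rw [Real.mul_rpow hc.le (Real.rpow_nonneg (by positivity) _),
              ← Real.rpow_mul (by positivity), one_div_mul_cancel hlam.ne', Real.rpow_one]
    have h3 : (∏ j ∈ u, γ j) ^ lam = ∏ j ∈ u, γ j ^ lam :=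
      (Real.finset_prod_rpow u γ (fun i _ => hγ i) lam).symm
    calc f u = Γ u.card ^ lam * ((∏ j ∈ u, γ j ^ lam) * Z ^ u.card) := by
          rw [hfdef]; dsimp only; rw [h1, h3]; ring
      _ ≤ c ^ lam * (u.card.factorial : ℝ) * ((∏ j ∈ u, γ j ^ lam) * Z ^ u.card) := by
          refine mul_le_mul_of_nonneg_right h2 ?_
          exact mul_nonneg (Finset.prod_nonneg fun j _ => Real.rpow_nonneg (hγ j) lam)
            (pow_nonneg hZ _)
      _ = c ^ lam * ((u.card.factorial : ℝ) * ∏ j ∈ u, x j) := by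
          rw [hxdef]
          simp only [Finset.prod_mul_distrib, Finset.prod_const]
          ring
  -- uniform bound on partial sums
  have hbound : ∀ s : Finset (Finset ℕ), ∑ u ∈ s, f u ≤ c ^ lam * (1 - q)⁻¹ := by
    intro s
    set T : Finset ℕ := s.sup id with hTdef
    have hsub : s ⊆ T.powerset := by
      intro u hu
      exact Finset.mem_powerset.2 (Finset.le_sup (f := id) hu)
    have hxT : ∑ j ∈ T, x j ≤ q := by
      have h5 : ∑ j ∈ T, γ j ^ lam ≤ S := Summable.sum_le_tsum T (fun j _ => Real.rpow_nonneg (hγ j) lam) hsum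
      calc ∑ j ∈ T, x j = (∑ j ∈ T, γ j ^ lam) * Z := by rw [Finset.sum_mul]
        _ ≤ S * Z := mul_le_mul_of_nonneg_right h5 hZ
        _ = q := by rw [hqdef]; ring
    calc ∑ u ∈ s, f u
        ≤ ∑ u ∈ s, c ^ lam * ((u.card.factorial : ℝ) * ∏ j ∈ u, x j) :=
          Finset.sum_le_sum fun u _ => hfb u
      _ ≤ ∑ u ∈ T.powerset, c ^ lam * ((u.card.factorial : ℝ) * ∏ j ∈ u, x j) := by
          refine Finset.sum_le_sum_of_subset_of_nonneg hsub fun u _ _ => ?_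
          have : (0:ℝ) ≤ ∏ j ∈ u, x j := Finset.prod_nonneg fun j _ => hx j
          positivity
      _ = ∑ k ∈ Finset.range (T.card + 1), ∑ u ∈ T.powersetCard k,
            c ^ lam * ((u.card.factorial : ℝ) * ∏ j ∈ u, x j) := by
          rw [Finset.powerset_card_disjiUnion]; exact Finset.sum_disjiUnion _ _ _
      _ ≤ ∑ k ∈ Finset.range (T.card + 1), c ^ lam * q ^ k := by
          refine Finset.sum_le_sum fun k _ => ?_
          have heq : ∑ u ∈ T.powersetCard k,
              c ^ lam * ((u.card.factorial : ℝ) * ∏ j ∈ u, x j)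
              = c ^ lam * ((k.factorial : ℝ) * ∑ u ∈ T.powersetCard k, ∏ j ∈ u, x j) := by
            rw [Finset.mul_sum, Finset.mul_sum]
            refine Finset.sum_congr rfl fun u hu => ?_
            rw [(Finset.mem_powersetCard.1 hu).2]
          rw [heq]
          refine mul_le_mul_of_nonneg_left ?_ (Real.rpow_nonneg hc.le lam)
          calc (k.factorial : ℝ) * ∑ u ∈ T.powersetCard k, ∏ j ∈ u, x j
              ≤ (∑ j ∈ T, x j) ^ k := pod_key x hx T k
            _ ≤ q ^ k := pow_le_pow_left₀ (Finset.sum_nonneg fun j _ => hx j) hxT k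
      _ ≤ c ^ lam * (1 - q)⁻¹ := by
          rw [← Finset.mul_sum]
          refine mul_le_mul_of_nonneg_left ?_ (Real.rpow_nonneg hc.le lam)
          have hgs : Summable (fun k : ℕ => q ^ k) := summable_geometric_of_lt_one hq0 hq1
          calc ∑ k ∈ Finset.range (T.card + 1), q ^ k
              ≤ ∑' k : ℕ, q ^ k := Summable.sum_le_tsum _ (fun k _ => pow_nonneg hq0 k) hgs
            _ = (1 - q)⁻¹ := tsum_geometric_of_lt_one hq0 hq1
  have hsummable : Summable f := summable_of_sum_le hf0 hbound
  exact ⟨hsummable, Summable.tsum_le_of_sum_le hsummable hbound⟩
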